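/- The space of $d$-dimensional permutons equipped with the box distance $d_\square$ is a complete metric space: a sequence of $d$-dimensional permutons converges (to a $d$-dimensional permuton) if and only if it is Cauchy with respect to $d_\square$. -/

import Mathlib

open MeasureTheory Filter Topology
open scoped ENNReal NNReal

/-- A `d`-dimensional permuton. -/
def IsPermuton {d : ℕ} (μ : Measure (Fin d → ℝ)) : Prop :=
  IsProbabilityMeasure μ ∧
    ∀ (i : Fin d) (a b : ℝ), 0 ≤ a → a ≤ b → b ≤ 1 →
      μ {x | x i ∈ Set.Icc a b} = ENNReal.ofReal (b - a)

/-- The box distance `d_□(μ, ν)`: the supremum over boxes `∏ᵢ [xᵢ,yᵢ] ⊆ [0,1]^d` of the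
discrepancy of the two measures. -/
noncomputable def boxDist {d : ℕ} (μ ν : Measure (Fin d → ℝ)) : ℝ :=
  ⨆ p : {p : (Fin d → ℝ) × (Fin d → ℝ) // ∀ i, 0 ≤ p.1 i ∧ p.1 i ≤ p.2 i ∧ p.2 i ≤ 1},
    |(μ (Set.univ.pi fun i => Set.Icc (p.1.1 i) (p.1.2 i))).toReal -
      (ν (Set.univ.pi fun i => Set.Icc (p.1.1 i) (p.1.2 i))).toReal|

namespace PermutonAux

variable {d : ℕ}

/-- The closed box. -/
def box (a b : Fin d → ℝ) : Set (Fin d → ℝ) := Set.univ.pi fun i => Set.Icc (a i) (b i)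

/-- The open box. -/
def obox (a b : Fin d → ℝ) : Set (Fin d → ℝ) := Set.univ.pi fun i => Set.Ioo (a i) (b i)

lemma measurableSet_box (a b : Fin d → ℝ) : MeasurableSet (box a b) :=
  MeasurableSet.univ_pi fun _ => measurableSet_Icc

lemma measurableSet_slab (i : Fin d) (a b : ℝ) :
    MeasurableSet {x : Fin d → ℝ | x i ∈ Set.Icc a b} :=
  (measurable_pi_apply i) measurableSet_Icc

lemma obox_subset (a b : Fin d → ℝ) : obox a b ⊆ box a b := fun x hx i hi =>
  Set.Ioo_subset_Icc_self (hx i hi)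

lemma isCompact_box (a b : Fin d → ℝ) : IsCompact (box a b) :=
  isCompact_univ_pi fun _ => isCompact_Icc

lemma isOpen_obox (a b : Fin d → ℝ) : IsOpen (obox a b) :=
  isOpen_set_pi Set.finite_univ fun _ _ => isOpen_Ioo

variable {μ : Measure (Fin d → ℝ)} (hμ : IsPermuton μ)

section PermutonBasic
include hμ

lemma perm_univ : μ Set.univ = 1 := hμ.1.measure_univ

lemma perm_outside (i : Fin d) : μ {x | x i ∉ Set.Icc (0:ℝ) 1} = 0 := by
  have h01 : μ {x | x i ∈ Set.Icc (0:ℝ) 1} = 1 := by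
    rw [hμ.2 i 0 1 le_rfl zero_le_one le_rfl]; simp
  haveI := hμ.1
  have : {x : Fin d → ℝ | x i ∉ Set.Icc (0:ℝ) 1} = {x | x i ∈ Set.Icc (0:ℝ) 1}ᶜ := rfl
  rw [this, measure_compl (measurableSet_slab i 0 1) (measure_ne_top μ _), h01, perm_univ hμ]
  simp

lemma perm_face (i : Fin d) (c : ℝ) : μ {x | x i = c} = 0 := by
  by_cases hc : c ∈ Set.Icc (0:ℝ) 1
  · have : {x : Fin d → ℝ | x i = c} = {x | x i ∈ Set.Icc c c} := by ext x; simp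
    rw [this, hμ.2 i c c hc.1 le_rfl hc.2]; simp
  · refine measure_mono_null ?_ (perm_outside hμ i)
    intro x hx; simp only [Set.mem_setOf_eq] at hx ⊢; rw [hx]; exact hc

lemma perm_slab_zero (i : Fin d) {a b : ℝ} (h : 1 ≤ a ∨ b ≤ 0) :
    μ {x | x i ∈ Set.Icc a b} = 0 := by
  have hsub : {x : Fin d → ℝ | x i ∈ Set.Icc a b} ⊆
      {x | x i ∉ Set.Icc (0:ℝ) 1} ∪ ({x | x i = 0} ∪ {x | x i = 1}) := by
    intro x hx
    simp only [Set.mem_setOf_eq, Set.mem_Icc, Set.mem_union] at hx ⊢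
    by_cases h01 : 0 ≤ x i ∧ x i ≤ 1
    · rcases h with h | h
      · exact Or.inr (Or.inr (le_antisymm h01.2 (le_trans h hx.1)))
      · exact Or.inr (Or.inl (le_antisymm (le_trans hx.2 h) h01.1))
    · exact Or.inl h01
  refine measure_mono_null hsub ?_
  rw [measure_union_null_iff, measure_union_null_iff]
  exact ⟨perm_outside hμ i, perm_face hμ i 0, perm_face hμ i 1⟩

lemma perm_slab_le (i : Fin d) {a b : ℝ} :
    μ {x | x i ∈ Set.Icc a b} ≤ ENNReal.ofReal (b - a) := by
  set a' := max a 0 with ha'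
  set b' := min b 1 with hb'
  by_cases h : a' ≤ b'
  · have hsub : {x : Fin d → ℝ | x i ∈ Set.Icc a b} ⊆
        {x | x i ∈ Set.Icc a' b'} ∪ {x | x i ∉ Set.Icc (0:ℝ) 1} := by
      intro x hx
      simp only [Set.mem_setOf_eq, Set.mem_Icc, Set.mem_union] at hx ⊢
      by_cases h01 : 0 ≤ x i ∧ x i ≤ 1
      · exact Or.inl ⟨max_le hx.1 h01.1, le_min hx.2 h01.2⟩
      · exact Or.inr h01
    calc μ {x | x i ∈ Set.Icc a b} ≤ μ {x | x i ∈ Set.Icc a' b'} + μ {x | x i ∉ Set.Icc (0:ℝ) 1} :=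
          le_trans (measure_mono hsub) (measure_union_le _ _)
      _ = ENNReal.ofReal (b' - a') := by
          rw [perm_outside hμ i, hμ.2 i a' b' (le_max_right a 0) h (min_le_right b 1), add_zero]
      _ ≤ ENNReal.ofReal (b - a) := by
          apply ENNReal.ofReal_le_ofReal
          have : a' ≥ a := le_max_left a 0
          have : b' ≤ b := min_le_left b 1
          linarith [le_max_left a 0, min_le_left b 1]
  · push_neg at h
    have : Set.Icc a b ∩ Set.Icc (0:ℝ) 1 = ∅ := by
      ext t; simp only [Set.mem_inter_iff, Set.mem_Icc, Set.mem_empty_iff_false, iff_false]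
      rintro ⟨⟨h1, h2⟩, h3, h4⟩
      have : a' ≤ t := max_le h1 h3
      have : t ≤ b' := le_min h2 h4
      linarith
    have hsub : {x : Fin d → ℝ | x i ∈ Set.Icc a b} ⊆ {x | x i ∉ Set.Icc (0:ℝ) 1} := by
      intro x hx
      simp only [Set.mem_setOf_eq] at hx ⊢
      intro h01
      have hmem : x i ∈ Set.Icc a b ∩ Set.Icc (0:ℝ) 1 := ⟨hx, h01⟩
      rw [this] at hmem
      exact hmem
    exact le_trans (measure_mono hsub) (by rw [perm_outside hμ i]; exact zero_le)


lemma perm_box_le_slab (i : Fin d) (a b : Fin d → ℝ) :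
    μ (box a b) ≤ μ {x | x i ∈ Set.Icc (a i) (b i)} := by
  apply measure_mono; intro x hx; exact hx i (Set.mem_univ i)

lemma perm_box01 : μ (box (fun _ => (0:ℝ)) (fun _ => (1:ℝ))) = 1 := by
  refine le_antisymm (le_trans (measure_mono (Set.subset_univ _)) (le_of_eq (perm_univ hμ))) ?_
  have hc : (box (fun _ => (0:ℝ)) (fun _ => (1:ℝ)))ᶜ ⊆ ⋃ i, {x : Fin d → ℝ | x i ∉ Set.Icc (0:ℝ) 1} := by
    intro x hx
    simp only [box, Set.mem_compl_iff, Set.mem_pi, Set.mem_univ, forall_true_left, not_forall] at hx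
    obtain ⟨i, hi⟩ := hx
    exact Set.mem_iUnion.mpr ⟨i, hi⟩
  have hnull : μ (box (fun _ => (0:ℝ)) (fun _ => (1:ℝ)))ᶜ = 0 :=
    measure_mono_null hc (by
      refine measure_iUnion_null fun i => perm_outside hμ i)
  have := measure_add_measure_compl (μ := μ)
    (measurableSet_box (fun _ => (0:ℝ)) (fun _ => (1:ℝ)))
  rw [hnull, add_zero, perm_univ hμ] at this
  exact this.ge

/-- The null set off which clamping is harmless. -/
lemma perm_core_null : μ (⋃ i, {x : Fin d → ℝ | x i ∉ Set.Ioo (0:ℝ) 1}) = 0 := by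
  refine measure_iUnion_null fun i => measure_mono_null
    (t := {x | x i ∉ Set.Icc (0:ℝ) 1} ∪ ({x | x i = 0} ∪ {x | x i = 1})) ?_ ?_
  · intro x hx
    simp only [Set.mem_setOf_eq, Set.mem_Ioo, Set.mem_union, Set.mem_Icc] at hx ⊢
    by_cases h0 : 0 ≤ x i
    · by_cases h1 : x i ≤ 1
      · rcases not_and_or.mp hx with h | h
        · exact Or.inr (Or.inl (le_antisymm (not_lt.mp h) h0))
        · exact Or.inr (Or.inr (le_antisymm h1 (not_lt.mp h)))
      · exact Or.inl (fun h => h1 h.2)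
    · exact Or.inl (fun h => h0 h.1)
  · rw [measure_union_null_iff, measure_union_null_iff]
    exact ⟨perm_outside hμ i, perm_face hμ i 0, perm_face hμ i 1⟩

end PermutonBasic

/-- clamp into [0,1] -/
noncomputable def clamp (c : ℝ) : ℝ := max 0 (min c 1)

lemma clamp_nonneg (c : ℝ) : 0 ≤ clamp c := le_max_left _ _
lemma clamp_le_one (c : ℝ) : clamp c ≤ 1 := max_le zero_le_one (min_le_right _ _)
lemma clamp_mono : Monotone clamp := fun _ _ h => max_le_max le_rfl (min_le_min h le_rfl)

lemma mem_clamp_iff {x c : ℝ} (hx : x ∈ Set.Ioo (0:ℝ) 1) : (clamp c ≤ x ↔ c ≤ x) ∧ (x ≤ clamp c ↔ x ≤ c) := by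
  unfold clamp
  constructor
  · constructor
    · intro h
      have h2 : min c 1 ≤ x := le_trans (le_max_right _ _) h
      rcases le_or_gt c 1 with hc | hc
      · rwa [min_eq_left hc] at h2
      · rw [min_eq_right hc.le] at h2; linarith [hx.2]
    · intro h
      exact max_le hx.1.le (le_trans (min_le_left _ _) h)
  · constructor
    · intro h
      rcases le_or_gt 0 (min c 1) with hc | hc
      · rw [max_eq_right hc] at h
        exact le_trans h (min_le_left _ _)
      · rw [max_eq_left hc.le] at h; linarith [hx.1]
    · intro h
      refine le_trans ?_ (le_max_right _ _)
      exact le_min h hx.2.le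

include hμ in
lemma perm_box_clamp (a b : Fin d → ℝ) :
    μ (box a b) = μ (box (fun i => clamp (a i)) (fun i => clamp (b i))) := by
  have hN := perm_core_null hμ
  have hdiff : ∀ s : Set (Fin d → ℝ), μ s = μ (s \ ⋃ i, {x : Fin d → ℝ | x i ∉ Set.Ioo (0:ℝ) 1}) :=
    fun s => (measure_diff_null hN).symm
  rw [hdiff (box a b), hdiff (box _ _)]
  congr 1
  ext x
  simp only [Set.mem_diff, Set.mem_iUnion, not_exists, Set.mem_setOf_eq, not_not]
  constructor <;> rintro ⟨hx, hcore⟩ <;> refine ⟨fun i hi => ?_, hcore⟩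
  · have := hx i hi
    exact ⟨((mem_clamp_iff (hcore i)).1).mpr this.1, ((mem_clamp_iff (hcore i)).2).mpr this.2⟩
  · have := hx i hi
    exact ⟨((mem_clamp_iff (hcore i)).1).mp this.1, ((mem_clamp_iff (hcore i)).2).mp this.2⟩

lemma box_empty_of {a b : Fin d → ℝ} (i : Fin d) (h : b i < a i) : box a b = ∅ := by
  ext x
  simp only [box, Set.mem_pi, Set.mem_univ, forall_true_left, Set.mem_empty_iff_false, iff_false,
    not_forall]
  exact ⟨i, fun hx => absurd (le_trans hx.1 hx.2) (not_le.mpr h)⟩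


section Dist

lemma toReal_prob_le_one {μ : Measure (Fin d → ℝ)} (hμ : IsProbabilityMeasure μ)
    (s : Set (Fin d → ℝ)) : (μ s).toReal ≤ 1 := by
  have h : μ s ≤ 1 := prob_le_one
  have := ENNReal.toReal_mono ENNReal.one_ne_top h
  simpa using this

lemma bddAbove_boxTerms {μ ν : Measure (Fin d → ℝ)} (hμ : IsProbabilityMeasure μ)
    (hν : IsProbabilityMeasure ν) :
    BddAbove (Set.range fun p : {p : (Fin d → ℝ) × (Fin d → ℝ) //
        ∀ i, 0 ≤ p.1 i ∧ p.1 i ≤ p.2 i ∧ p.2 i ≤ 1} =>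
      |(μ (Set.univ.pi fun i => Set.Icc (p.1.1 i) (p.1.2 i))).toReal -
        (ν (Set.univ.pi fun i => Set.Icc (p.1.1 i) (p.1.2 i))).toReal|) := by
  refine ⟨1, ?_⟩
  rintro _ ⟨p, rfl⟩
  rw [abs_sub_le_iff]
  have h1 := toReal_prob_le_one hμ (Set.univ.pi fun i => Set.Icc (p.1.1 i) (p.1.2 i))
  have h2 := toReal_prob_le_one hν (Set.univ.pi fun i => Set.Icc (p.1.1 i) (p.1.2 i))
  have h3 : (0:ℝ) ≤ (μ (Set.univ.pi fun i => Set.Icc (p.1.1 i) (p.1.2 i))).toReal :=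
    ENNReal.toReal_nonneg
  have h4 : (0:ℝ) ≤ (ν (Set.univ.pi fun i => Set.Icc (p.1.1 i) (p.1.2 i))).toReal :=
    ENNReal.toReal_nonneg
  constructor <;> linarith

lemma nonempty_boxIndex : Nonempty {p : (Fin d → ℝ) × (Fin d → ℝ) //
    ∀ i, 0 ≤ p.1 i ∧ p.1 i ≤ p.2 i ∧ p.2 i ≤ 1} :=
  ⟨⟨(fun _ => 0, fun _ => 1), fun _ => ⟨le_rfl, zero_le_one, le_rfl⟩⟩⟩

lemma abs_le_boxDist {μ ν : Measure (Fin d → ℝ)} (hμ : IsProbabilityMeasure μ)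
    (hν : IsProbabilityMeasure ν) {a b : Fin d → ℝ}
    (h : ∀ i, 0 ≤ a i ∧ a i ≤ b i ∧ b i ≤ 1) :
    |(μ (box a b)).toReal - (ν (box a b)).toReal| ≤ boxDist μ ν :=
  le_ciSup (bddAbove_boxTerms hμ hν) ⟨(a, b), h⟩


lemma boxDist_triangle {μ1 μ2 ν : Measure (Fin d → ℝ)} (h1 : IsProbabilityMeasure μ1)
    (h2 : IsProbabilityMeasure μ2) (hν : IsProbabilityMeasure ν) :
    boxDist μ1 μ2 ≤ boxDist μ1 ν + boxDist μ2 ν := by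
  haveI := nonempty_boxIndex (d := d)
  refine ciSup_le fun p => ?_
  set B := Set.univ.pi fun i => Set.Icc (p.1.1 i) (p.1.2 i) with hB
  have h3 : |(μ1 B).toReal - (ν B).toReal| ≤ boxDist μ1 ν :=
    le_ciSup (bddAbove_boxTerms h1 hν) p
  have h4 : |(μ2 B).toReal - (ν B).toReal| ≤ boxDist μ2 ν :=
    le_ciSup (bddAbove_boxTerms h2 hν) p
  calc |(μ1 B).toReal - (μ2 B).toReal|
      ≤ |(μ1 B).toReal - (ν B).toReal| + |(ν B).toReal - (μ2 B).toReal| := abs_sub_le _ _ _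
    _ = |(μ1 B).toReal - (ν B).toReal| + |(μ2 B).toReal - (ν B).toReal| := by
        rw [abs_sub_comm ((ν B).toReal)]
    _ ≤ boxDist μ1 ν + boxDist μ2 ν := add_le_add h3 h4

lemma boxDist_nonneg {μ ν : Measure (Fin d → ℝ)} (h1 : IsProbabilityMeasure μ)
    (h2 : IsProbabilityMeasure ν) : 0 ≤ boxDist μ ν := by
  haveI := nonempty_boxIndex (d := d)
  exact le_trans (abs_nonneg _) (le_ciSup (bddAbove_boxTerms h1 h2) (Classical.arbitrary _))

end Dist

section Limit

variable {μs : ℕ → Measure (Fin d → ℝ)}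

lemma exists_box_limit (hμs : ∀ n, IsPermuton (μs n))
    (hC : ∀ ε : ℝ, 0 < ε → ∃ N : ℕ, ∀ m ≥ N, ∀ n ≥ N, boxDist (μs m) (μs n) < ε)
    (a b : Fin d → ℝ) :
    ∃ l : ℝ≥0∞, l ≠ ⊤ ∧ Tendsto (fun n => μs n (box a b)) atTop (𝓝 l) := by
  by_cases hab : ∀ i, a i ≤ b i
  · set a' := fun i => clamp (a i) with ha'
    set b' := fun i => clamp (b i) with hb'
    have heq : ∀ n, μs n (box a b) = μs n (box a' b') := fun n => perm_box_clamp (hμs n) a b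
    have hp : ∀ i, 0 ≤ a' i ∧ a' i ≤ b' i ∧ b' i ≤ 1 :=
      fun i => ⟨clamp_nonneg _, clamp_mono (hab i), clamp_le_one _⟩
    have hcauchy : CauchySeq (fun n => (μs n (box a' b')).toReal) := by
      rw [Metric.cauchySeq_iff]
      intro ε hε
      obtain ⟨N, hN⟩ := hC ε hε
      refine ⟨N, fun m hm n hn => ?_⟩
      rw [Real.dist_eq]
      exact lt_of_le_of_lt (abs_le_boxDist (hμs m).1 (hμs n).1 hp) (hN m hm n hn)
    obtain ⟨l, hl⟩ := cauchySeq_tendsto_of_complete hcauchy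
    refine ⟨ENNReal.ofReal l, ENNReal.ofReal_ne_top, ?_⟩
    have hrw : ∀ n, μs n (box a b) = ENNReal.ofReal ((μs n (box a' b')).toReal) := fun n => by
      haveI := (hμs n).1
      rw [ENNReal.ofReal_toReal (measure_ne_top _ _), heq n]
    simp only [hrw]
    exact ENNReal.tendsto_ofReal hl
  · push_neg at hab
    obtain ⟨i, hi⟩ := hab
    have hrw : ∀ n, μs n (box a b) = 0 := fun n => by rw [box_empty_of i hi, measure_empty]
    refine ⟨0, by simp, ?_⟩
    simp only [hrw]
    exact tendsto_const_nhds

end Limit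

section OuterM

variable {μs : ℕ → Measure (Fin d → ℝ)} {L : (Fin d → ℝ) → (Fin d → ℝ) → ℝ≥0∞}

/-- The premeasure used for the Carathéodory construction. -/
noncomputable def rho (L : (Fin d → ℝ) → (Fin d → ℝ) → ℝ≥0∞) (A : Set (Fin d → ℝ)) : ℝ≥0∞ :=
  ⨅ (a : Fin d → ℝ) (b : Fin d → ℝ) (_ : A ⊆ obox a b), L a b

lemma rho_le {A : Set (Fin d → ℝ)} {a b : Fin d → ℝ} (h : A ⊆ obox a b) :
    rho L A ≤ L a b :=
  iInf_le_of_le a (iInf_le_of_le b (iInf_le_of_le h le_rfl))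

lemma rho_mono {A B : Set (Fin d → ℝ)} (h : A ⊆ B) : rho L A ≤ rho L B :=
  le_iInf fun a => le_iInf fun b => le_iInf fun hsub => rho_le (h.trans hsub)

variable (hμs : ∀ n, IsPermuton (μs n))
  (hL : ∀ a b, Tendsto (fun n => μs n (box a b)) atTop (𝓝 (L a b)))

section WithL
include hμs hL

lemma L_ne_top (a b : Fin d → ℝ) : L a b ≠ ⊤ := by
  have hb : ∀ n, μs n (box a b) ≤ 1 := by
    intro n
    haveI := (hμs n).1
    exact prob_le_one
  have h := le_of_tendsto (hL a b) (Eventually.of_forall hb)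
  exact (h.trans_lt (by simp)).ne

include hμs hL in
lemma L_le_one (a b : Fin d → ℝ) : L a b ≤ 1 := by
  have hb : ∀ n, μs n (box a b) ≤ 1 := by
    intro n
    haveI := (hμs n).1
    exact prob_le_one
  exact le_of_tendsto (hL a b) (Eventually.of_forall hb)

lemma L_box00 (hd : 0 < d) : L (fun _ => (0:ℝ)) (fun _ => (0:ℝ)) = 0 := by
  have hz : ∀ n, μs n (box (fun _ => (0:ℝ)) (fun _ => (0:ℝ))) = 0 := by
    intro n
    refine le_antisymm ?_ zero_le
    refine le_trans (perm_box_le_slab (hμs n) ⟨0, hd⟩ _ _) ?_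
    have := perm_slab_le (hμs n) (⟨0, hd⟩ : Fin d) (a := (0:ℝ)) (b := (0:ℝ))
    simpa using this
  refine tendsto_nhds_unique (hL _ _) ?_
  simp only [hz]
  exact tendsto_const_nhds

lemma rho_empty (hd : 0 < d) : rho L (∅ : Set (Fin d → ℝ)) = 0 := by
  refine le_antisymm ?_ zero_le
  have hsub : (∅ : Set (Fin d → ℝ)) ⊆ obox (fun _ => (0:ℝ)) (fun _ => (0:ℝ)) :=
    Set.empty_subset _
  exact le_trans (rho_le hsub) (le_of_eq (L_box00 hμs hL hd))

lemma L_enlarge (a b : Fin d → ℝ) {ε : ℝ} (hε : 0 < ε) :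
    L (fun i => a i - ε) (fun i => b i + ε) ≤ L a b + (d : ℝ≥0∞) * ENNReal.ofReal (2 * ε) := by
  have key : ∀ n, μs n (box (fun i => a i - ε) (fun i => b i + ε)) ≤
      μs n (box a b) + (d : ℝ≥0∞) * ENNReal.ofReal (2 * ε) := by
    intro n
    have hsub : box (fun i => a i - ε) (fun i => b i + ε) ⊆
        box a b ∪ ⋃ i : Fin d,
          ({x : Fin d → ℝ | x i ∈ Set.Icc (a i - ε) (a i)} ∪
            {x | x i ∈ Set.Icc (b i) (b i + ε)}) := by
      intro x hx
      by_cases hxb : x ∈ box a b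
      · exact Or.inl hxb
      · right
        simp only [box, Set.mem_pi, Set.mem_univ, forall_true_left, not_forall] at hxb
        obtain ⟨i, hi⟩ := hxb
        have hxi := hx i (Set.mem_univ i)
        simp only [Set.mem_Icc] at hxi
        refine Set.mem_iUnion.mpr ⟨i, ?_⟩
        simp only [Set.mem_union, Set.mem_setOf_eq, Set.mem_Icc, Set.mem_Icc] at *
        rcases not_and_or.mp hi with h | h
        · exact Or.inl ⟨hxi.1, (not_le.mp h).le⟩
        · exact Or.inr ⟨(not_le.mp h).le, hxi.2⟩
    have hslabs : μs n (⋃ i : Fin d,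
        ({x : Fin d → ℝ | x i ∈ Set.Icc (a i - ε) (a i)} ∪
          {x | x i ∈ Set.Icc (b i) (b i + ε)})) ≤ (d : ℝ≥0∞) * ENNReal.ofReal (2 * ε) := by
      refine le_trans (measure_iUnion_le _) ?_
      rw [tsum_fintype]
      have hterm : ∀ i : Fin d,
          μs n ({x : Fin d → ℝ | x i ∈ Set.Icc (a i - ε) (a i)} ∪
            {x | x i ∈ Set.Icc (b i) (b i + ε)}) ≤ ENNReal.ofReal (2 * ε) := by
        intro i
        refine le_trans (measure_union_le _ _) ?_
        have h1 := perm_slab_le (hμs n) i (a := a i - ε) (b := a i)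
        have h2 := perm_slab_le (hμs n) i (a := b i) (b := b i + ε)
        have e1 : a i - (a i - ε) = ε := by ring
        have e2 : b i + ε - b i = ε := by ring
        rw [e1] at h1; rw [e2] at h2
        calc _ ≤ ENNReal.ofReal ε + ENNReal.ofReal ε := add_le_add h1 h2
          _ = ENNReal.ofReal (2 * ε) := by rw [← ENNReal.ofReal_add hε.le hε.le]; ring_nf
      calc ∑ i : Fin d, μs n _ ≤ ∑ _i : Fin d, ENNReal.ofReal (2 * ε) :=
            Finset.sum_le_sum fun i _ => hterm i
        _ = (d : ℝ≥0∞) * ENNReal.ofReal (2 * ε) := by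
            rw [Finset.sum_const, Finset.card_univ, Fintype.card_fin, nsmul_eq_mul]
    exact le_trans (measure_mono hsub) (le_trans (measure_union_le _ _)
      (add_le_add le_rfl hslabs))
  exact le_of_tendsto_of_tendsto' (hL _ _) ((hL a b).add tendsto_const_nhds) key

lemma ofFunction_box_le (hd : 0 < d) (a b : Fin d → ℝ) :
    OuterMeasure.ofFunction (rho L) (rho_empty hμs hL hd) (box a b) ≤ L a b := by
  refine le_trans (OuterMeasure.ofFunction_le _) ?_
  refine ENNReal.le_of_forall_pos_le_add fun ε hε _ => ?_
  set δ : ℝ := (ε : ℝ) / (2 * d + 1) with hδdef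
  have hεpos : (0:ℝ) < ε := hε
  have hδpos : 0 < δ := by positivity
  have hsub : box a b ⊆ obox (fun i => a i - δ) (fun i => b i + δ) := by
    intro x hx i hi
    have := hx i hi
    simp only [Set.mem_Icc] at this
    refine Set.mem_Ioo.mpr ⟨?_, ?_⟩
    · show a i - δ < x i; linarith [this.1]
    · show x i < b i + δ; linarith [this.2]
  refine le_trans (rho_le hsub) (le_trans (L_enlarge hμs hL a b hδpos) ?_)
  refine add_le_add le_rfl ?_
  have he : (d : ℝ≥0∞) * ENNReal.ofReal (2 * δ) = ENNReal.ofReal ((d:ℝ) * (2 * δ)) := by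
    conv_rhs => rw [ENNReal.ofReal_mul (show (0:ℝ) ≤ (d:ℝ) by positivity),
      ENNReal.ofReal_natCast]
  rw [he]
  have harith : (d:ℝ) * (2 * δ) ≤ (ε:ℝ) := by
    rw [hδdef, div_eq_mul_inv]
    have h1 : (0:ℝ) < 2 * d + 1 := by positivity
    have h2 : (d:ℝ) * (2 * ((ε:ℝ) * (2*(d:ℝ)+1)⁻¹)) = (2*(d:ℝ)) * (2*(d:ℝ)+1)⁻¹ * (ε:ℝ) := by
      ring
    rw [h2]
    have h3 : (2*(d:ℝ)) * (2*(d:ℝ)+1)⁻¹ ≤ 1 := by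
      rw [← div_eq_mul_inv]
      exact div_le_one_of_le₀ (by linarith) h1.le
    calc (2*(d:ℝ)) * (2*(d:ℝ)+1)⁻¹ * (ε:ℝ) ≤ 1 * (ε:ℝ) :=
          mul_le_mul_of_nonneg_right h3 hεpos.le
      _ = (ε:ℝ) := one_mul _
  exact le_trans (ENNReal.ofReal_le_ofReal harith) (le_of_eq ENNReal.ofReal_coe_nnreal)


omit hμs hL in
lemma exists_good_box {A : Set (Fin d → ℝ)} {c : ℝ≥0∞} (hfin : rho L A ≠ ⊤) (hc : c ≠ 0) :
    ∃ u v : Fin d → ℝ, A ⊆ obox u v ∧ L u v ≤ rho L A + c := by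
  have hlt : rho L A < rho L A + c := ENNReal.lt_add_right hfin hc
  have h' : (⨅ (a : Fin d → ℝ) (b : Fin d → ℝ) (_ : A ⊆ obox a b), L a b) < rho L A + c := hlt
  obtain ⟨u, hu⟩ := iInf_lt_iff.mp h'
  obtain ⟨v, hv⟩ := iInf_lt_iff.mp hu
  obtain ⟨hsub, hlt'⟩ := iInf_lt_iff.mp hv
  exact ⟨u, v, hsub, hlt'.le⟩

include hμs hL in
lemma le_ofFunction_box (hd : 0 < d) (a b : Fin d → ℝ) :
    L a b ≤ OuterMeasure.ofFunction (rho L) (rho_empty hμs hL hd) (box a b) := by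
  rw [OuterMeasure.ofFunction_apply]
  refine le_iInf fun t => le_iInf fun ht => ?_
  refine ENNReal.le_of_forall_pos_le_add fun ε hε hfin => ?_
  obtain ⟨δ, hδpos, hδsum⟩ := ENNReal.exists_pos_sum_of_countable'
    (by exact_mod_cast hε.ne' : (ε : ℝ≥0∞) ≠ 0) ℕ
  have hex : ∀ j : ℕ, ∃ u v : Fin d → ℝ, t j ⊆ obox u v ∧ L u v ≤ rho L (t j) + δ j := by
    intro j
    have hne : rho L (t j) ≠ ⊤ := ((ENNReal.le_tsum j).trans_lt hfin).ne
    exact exists_good_box hne (hδpos j).ne'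
  choose u v hsub hLle using hex
  have hcover : box a b ⊆ ⋃ j, obox (u j) (v j) := ht.trans (Set.iUnion_mono hsub)
  obtain ⟨J, hJ⟩ := (isCompact_box a b).elim_finite_subcover (fun j => obox (u j) (v j))
    (fun j => isOpen_obox _ _) hcover
  have key : ∀ n, μs n (box a b) ≤ ∑ j ∈ J, μs n (box (u j) (v j)) := fun n =>
    le_trans (measure_mono (hJ.trans (Set.iUnion₂_mono fun j _ => obox_subset _ _)))
      (measure_biUnion_finset_le _ _)
  have hlim : L a b ≤ ∑ j ∈ J, L (u j) (v j) :=
    le_of_tendsto_of_tendsto' (hL a b) (tendsto_finset_sum J fun j _ => hL (u j) (v j)) key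
  calc L a b ≤ ∑ j ∈ J, (rho L (t j) + δ j) := hlim.trans (Finset.sum_le_sum fun j _ => hLle j)
    _ ≤ ∑' j, (rho L (t j) + δ j) := ENNReal.sum_le_tsum J
    _ = (∑' j, rho L (t j)) + ∑' j, δ j := ENNReal.tsum_add
    _ ≤ (∑' j, rho L (t j)) + ε := add_le_add le_rfl hδsum.le

include hμs hL in
lemma halfspace_split (i : Fin d) (c : ℝ) {s : Set (Fin d → ℝ)} (hfin : rho L s ≠ ⊤)
    {e : ℝ≥0∞} (he : e ≠ 0) (hetop : e ≠ ⊤) :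
    rho L (s ∩ {x | x i ≤ c}) + rho L (s \ {x | x i ≤ c}) ≤ rho L s + e := by
  have he2 : e / 2 ≠ 0 := by
    simp only [ne_eq, ENNReal.div_eq_zero_iff]
    push_neg
    exact ⟨he, by simp⟩
  obtain ⟨u, v, hsub, hLle⟩ := exists_good_box (L := L) hfin he2
  set w : ℝ := (min 1 (e / 2)).toReal with hwdef
  have hwne : min 1 (e / 2) ≠ ⊤ := by
    simp only [ne_eq, min_eq_top, not_and]
    intro h; simp at h
  have hw : 0 < w := by
    refine ENNReal.toReal_pos ?_ hwne
    have : 0 < min 1 (e / 2) :=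
      lt_min (by norm_num) (ENNReal.div_pos he (by norm_num))
    exact this.ne'
  have hwle : ENNReal.ofReal w ≤ e / 2 := by
    rw [hwdef, ENNReal.ofReal_toReal hwne]
    exact min_le_right _ _
  set v' := Function.update v i (min (v i) (c + w)) with hv'
  set u' := Function.update u i (max (u i) c) with hu'
  have h1 : s ∩ {x | x i ≤ c} ⊆ obox u v' := by
    rintro x ⟨hx, hxc⟩ k hk
    have hxk := hsub hx k hk
    simp only [Set.mem_Ioo] at hxk ⊢
    by_cases hki : k = i
    · subst hki
      rw [hv', Function.update_self]
      exact ⟨hxk.1, lt_min hxk.2 (lt_of_le_of_lt hxc (by linarith))⟩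
    · rw [hv', Function.update_of_ne hki]
      exact hxk
  have h2 : s \ {x | x i ≤ c} ⊆ obox u' v := by
    rintro x ⟨hx, hxc⟩ k hk
    have hxk := hsub hx k hk
    simp only [Set.mem_setOf_eq, not_le] at hxc
    simp only [Set.mem_Ioo] at hxk ⊢
    by_cases hki : k = i
    · subst hki
      rw [hu', Function.update_self]
      exact ⟨max_lt hxk.1 hxc, hxk.2⟩
    · rw [hu', Function.update_of_ne hki]
      exact hxk
  have hbox1 : box u v' ⊆ box u v := by
    intro x hx k hk
    have := hx k hk
    simp only [Set.mem_Icc] at this ⊢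
    refine ⟨this.1, this.2.trans ?_⟩
    by_cases hki : k = i
    · subst hki; rw [hv', Function.update_self]; exact min_le_left _ _
    · rw [hv', Function.update_of_ne hki]
  have hbox2 : box u' v ⊆ box u v := by
    intro x hx k hk
    have := hx k hk
    simp only [Set.mem_Icc] at this ⊢
    refine ⟨le_trans ?_ this.1, this.2⟩
    by_cases hki : k = i
    · subst hki; rw [hu', Function.update_self]; exact le_max_left _ _
    · rw [hu', Function.update_of_ne hki]
  have hinter : box u v' ∩ box u' v ⊆ {x | x i ∈ Set.Icc c (c + w)} := by
    rintro x ⟨hx1, hx2⟩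
    have h1' := hx1 i (Set.mem_univ i)
    have h2' := hx2 i (Set.mem_univ i)
    simp only [Set.mem_Icc] at h1' h2'
    rw [hv', Function.update_self] at h1'
    rw [hu', Function.update_self] at h2'
    exact ⟨le_trans (le_max_right _ _) h2'.1, h1'.2.trans (min_le_right _ _)⟩
  have hsum : L u v' + L u' v ≤ L u v + ENNReal.ofReal w := by
    refine le_of_tendsto_of_tendsto' ((hL u v').add (hL u' v))
      ((hL u v).add tendsto_const_nhds) fun n => ?_
    have hadd := measure_union_add_inter (μ := μs n) (box u v') (measurableSet_box u' v)
    calc μs n (box u v') + μs n (box u' v)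
        = μs n (box u v' ∪ box u' v) + μs n (box u v' ∩ box u' v) := hadd.symm
      _ ≤ μs n (box u v) + ENNReal.ofReal (c + w - c) := by
          refine add_le_add (measure_mono (Set.union_subset hbox1 hbox2)) ?_
          refine le_trans (measure_mono hinter) (perm_slab_le (hμs n) i)
      _ = μs n (box u v) + ENNReal.ofReal w := by rw [show c + w - c = w by ring]
  calc rho L (s ∩ {x | x i ≤ c}) + rho L (s \ {x | x i ≤ c})
      ≤ L u v' + L u' v := add_le_add (rho_le h1) (rho_le h2)
    _ ≤ L u v + ENNReal.ofReal w := hsum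
    _ ≤ (rho L s + e / 2) + e / 2 := add_le_add hLle hwle
    _ = rho L s + e := by rw [add_assoc, ENNReal.add_halves]

include hμs hL in
lemma halfspace_caratheodory (hd : 0 < d) (i : Fin d) (c : ℝ) :
    MeasurableSet[(OuterMeasure.ofFunction (rho L) (rho_empty hμs hL hd)).caratheodory]
      {x : Fin d → ℝ | x i ≤ c} := by
  set m := OuterMeasure.ofFunction (rho L) (rho_empty hμs hL hd) with hm
  rw [OuterMeasure.isCaratheodory_iff_le]
  intro A
  have hA : m A = ⨅ (t : ℕ → Set (Fin d → ℝ)) (_ : A ⊆ Set.iUnion t), ∑' n, rho L (t n) :=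
    OuterMeasure.ofFunction_apply _ _ _
  rw [hA]
  refine le_iInf fun t => le_iInf fun ht => ?_
  refine ENNReal.le_of_forall_pos_le_add fun ε hε hfin => ?_
  obtain ⟨δ, hδpos, hδsum⟩ := ENNReal.exists_pos_sum_of_countable'
    (by exact_mod_cast hε.ne' : (ε : ℝ≥0∞) ≠ 0) ℕ
  have hδtop : ∀ j, δ j ≠ ⊤ := fun j =>
    ((ENNReal.le_tsum j).trans_lt (hδsum.trans_le (le_top.trans (by simp)))).ne
  have hkey : ∀ j, rho L (t j ∩ {x | x i ≤ c}) + rho L (t j \ {x | x i ≤ c})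
      ≤ rho L (t j) + δ j := by
    intro j
    have hne : rho L (t j) ≠ ⊤ := ((ENNReal.le_tsum j).trans_lt hfin).ne
    exact halfspace_split hμs hL i c hne (hδpos j).ne' (hδtop j)
  have hm1 : m (A ∩ {x | x i ≤ c}) ≤ ∑' j, rho L (t j ∩ {x | x i ≤ c}) := by
    refine le_trans (measure_mono ?_) (le_trans (measure_iUnion_le _) (ENNReal.tsum_le_tsum fun j =>
      OuterMeasure.ofFunction_le _))
    intro x hx
    obtain ⟨j, hj⟩ := Set.mem_iUnion.mp (ht hx.1)
    exact Set.mem_iUnion.mpr ⟨j, hj, hx.2⟩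
  have hm2 : m (A \ {x | x i ≤ c}) ≤ ∑' j, rho L (t j \ {x | x i ≤ c}) := by
    refine le_trans (measure_mono ?_) (le_trans (measure_iUnion_le _) (ENNReal.tsum_le_tsum fun j =>
      OuterMeasure.ofFunction_le _))
    intro x hx
    obtain ⟨j, hj⟩ := Set.mem_iUnion.mp (ht hx.1)
    exact Set.mem_iUnion.mpr ⟨j, hj, hx.2⟩
  calc m (A ∩ {x | x i ≤ c}) + m (A \ {x | x i ≤ c})
      ≤ (∑' j, rho L (t j ∩ {x | x i ≤ c})) + ∑' j, rho L (t j \ {x | x i ≤ c}) :=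
        add_le_add hm1 hm2
    _ = ∑' j, (rho L (t j ∩ {x | x i ≤ c}) + rho L (t j \ {x | x i ≤ c})) :=
        ENNReal.tsum_add.symm
    _ ≤ ∑' j, (rho L (t j) + δ j) := ENNReal.tsum_le_tsum hkey
    _ = (∑' j, rho L (t j)) + ∑' j, δ j := ENNReal.tsum_add
    _ ≤ (∑' j, rho L (t j)) + ε := add_le_add le_rfl hδsum.le

include hμs hL in
lemma borel_le_caratheodory (hd : 0 < d) :
    (inferInstance : MeasurableSpace (Fin d → ℝ)) ≤
      (OuterMeasure.ofFunction (rho L) (rho_empty hμs hL hd)).caratheodory := by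
  set m := OuterMeasure.ofFunction (rho L) (rho_empty hμs hL hd) with hm
  show (MeasurableSpace.pi : MeasurableSpace (Fin d → ℝ)) ≤ m.caratheodory
  refine iSup_le fun i => ?_
  have hb : (Real.measurableSpace : MeasurableSpace ℝ) =
      MeasurableSpace.generateFrom (Set.range Set.Iic) :=
    (BorelSpace.measurable_eq (α := ℝ)).trans (borel_eq_generateFrom_Iic ℝ)
  show MeasurableSpace.comap (fun b : Fin d → ℝ => b i) Real.measurableSpace ≤ m.caratheodory
  rw [hb, MeasurableSpace.comap_generateFrom]
  refine MeasurableSpace.generateFrom_le ?_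
  rintro s ⟨_, ⟨c, rfl⟩, rfl⟩
  exact halfspace_caratheodory hμs hL hd i c

end WithL

end OuterM

section Construction

variable {μs : ℕ → Measure (Fin d → ℝ)}

lemma exists_limit_permuton (hd : 0 < d) (hμs : ∀ n, IsPermuton (μs n))
    (hC : ∀ ε : ℝ, 0 < ε → ∃ N : ℕ, ∀ m ≥ N, ∀ n ≥ N, boxDist (μs m) (μs n) < ε) :
    ∃ μ : Measure (Fin d → ℝ), IsPermuton μ ∧
      ∀ a b : Fin d → ℝ, Tendsto (fun n => μs n (box a b)) atTop (𝓝 (μ (box a b))) := by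
  have hex := fun (p : (Fin d → ℝ) × (Fin d → ℝ)) => exists_box_limit hμs hC p.1 p.2
  choose L' hLtop' hL' using hex
  set L : (Fin d → ℝ) → (Fin d → ℝ) → ℝ≥0∞ := fun a b => L' (a, b) with hLdef
  have hL : ∀ a b, Tendsto (fun n => μs n (box a b)) atTop (𝓝 (L a b)) :=
    fun a b => hL' (a, b)
  set m := OuterMeasure.ofFunction (rho L) (rho_empty hμs hL hd) with hm
  have hle := borel_le_caratheodory hμs hL hd
  set μ := m.toMeasure hle with hμdef
  have hbox : ∀ a b : Fin d → ℝ, μ (box a b) = L a b := by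
    intro a b
    rw [hμdef, toMeasure_apply m hle (measurableSet_box a b)]
    exact le_antisymm (ofFunction_box_le hμs hL hd a b) (le_ofFunction_box hμs hL hd a b)
  -- integer grid cells
  set cell : (Fin d → ℤ) → Set (Fin d → ℝ) :=
    fun z => box (fun i => (z i : ℝ)) (fun i => (z i : ℝ) + 1) with hcelldef
  have hcellmeas : ∀ z, MeasurableSet (cell z) := fun z => measurableSet_box _ _
  have hcover : ∀ s : Set (Fin d → ℝ), s ⊆ ⋃ z : Fin d → ℤ, cell z := by
    intro s x _
    refine Set.mem_iUnion.mpr ⟨fun i => ⌊x i⌋, fun i _ => ?_⟩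
    exact ⟨Int.floor_le (x i), (Int.lt_floor_add_one (x i)).le⟩
  have hcellzero : ∀ z : Fin d → ℤ, z ≠ 0 → μ (cell z) = 0 := by
    intro z hz
    have hzero : ∀ n, μs n (cell z) = 0 := by
      intro n
      obtain ⟨i, hi⟩ := Function.ne_iff.mp hz
      rw [Pi.zero_apply] at hi
      refine le_antisymm (le_trans (perm_box_le_slab (hμs n) i _ _) ?_) zero_le
      rcases lt_or_gt_of_ne hi with h | h
      · -- z i < 0, so z i + 1 ≤ 0
        have : ((z i : ℝ) + 1) ≤ 0 := by
          have : z i + 1 ≤ 0 := by omega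
          exact_mod_cast this
        exact le_of_eq (perm_slab_zero (hμs n) i (Or.inr this))
      · have : (1:ℝ) ≤ (z i : ℝ) := by exact_mod_cast h
        exact le_of_eq (perm_slab_zero (hμs n) i (Or.inl this))
    have hz0 : Tendsto (fun n => μs n (cell z)) atTop (𝓝 0) := by
      have heq : (fun n => μs n (cell z)) = fun _ => 0 := funext hzero
      rw [heq]
      exact tendsto_const_nhds
    rw [hcelldef, hbox]
    exact tendsto_nhds_unique (hL _ _) hz0
  have hcell0 : cell 0 = box (fun _ => (0:ℝ)) (fun _ => (1:ℝ)) := by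
    rw [hcelldef]
    congr 1 <;> funext i <;> simp
  have hμcell0 : μ (cell 0) = 1 := by
    rw [hcell0, hbox]
    refine tendsto_nhds_unique (hL _ _) ?_
    have : ∀ n, μs n (box (fun _ => (0:ℝ)) (fun _ => (1:ℝ))) = 1 := fun n => perm_box01 (hμs n)
    simp only [this]
    exact tendsto_const_nhds
  have hμuniv : μ Set.univ = 1 := by
    refine le_antisymm ?_ ?_
    · calc μ Set.univ ≤ μ (⋃ z : Fin d → ℤ, cell z) := measure_mono (hcover _)
        _ ≤ ∑' z : Fin d → ℤ, μ (cell z) := measure_iUnion_le _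
        _ = μ (cell 0) := tsum_eq_single 0 fun z hz => hcellzero z hz
        _ = 1 := hμcell0
    · rw [← hμcell0]
      exact measure_mono (Set.subset_univ _)
  have hprob : IsProbabilityMeasure μ := ⟨hμuniv⟩
  have hslab : ∀ (i : Fin d) (a b : ℝ), 0 ≤ a → a ≤ b → b ≤ 1 →
      μ {x | x i ∈ Set.Icc a b} = ENNReal.ofReal (b - a) := by
    intro i a b h0 hab h1
    set u : Fin d → ℝ := Function.update (fun _ => (0:ℝ)) i a with hu
    set v : Fin d → ℝ := Function.update (fun _ => (1:ℝ)) i b with hv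
    have huvL : μ (box u v) = ENNReal.ofReal (b - a) := by
      rw [hbox]
      refine tendsto_nhds_unique (hL _ _) ?_
      have hval : ∀ n, μs n (box u v) = ENNReal.ofReal (b - a) := by
        intro n
        refine le_antisymm ?_ ?_
        · refine le_trans (perm_box_le_slab (hμs n) i u v) ?_
          rw [hu, hv]
          simp only [Function.update_self]
          exact le_of_eq ((hμs n).2 i a b h0 hab h1)
        · rw [← (hμs n).2 i a b h0 hab h1]
          have hdiff : {x : Fin d → ℝ | x i ∈ Set.Icc a b} \ box u v ⊆
              ⋃ j, {x : Fin d → ℝ | x j ∉ Set.Icc (0:ℝ) 1} := by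
            rintro x ⟨hx, hxb⟩
            simp only [box, Set.mem_pi, Set.mem_univ, forall_true_left, not_forall] at hxb
            obtain ⟨k, hk⟩ := hxb
            by_cases hki : k = i
            · subst hki
              rw [hu, hv] at hk
              simp only [Function.update_self] at hk
              exact absurd hx hk
            · refine Set.mem_iUnion.mpr ⟨k, ?_⟩
              rw [hu, hv] at hk
              simp only [Function.update_of_ne hki] at hk
              exact hk
          have hnull : μs n ({x : Fin d → ℝ | x i ∈ Set.Icc a b} \ box u v) = 0 :=
            measure_mono_null hdiff (measure_iUnion_null fun j => perm_outside (hμs n) j)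
          calc μs n {x | x i ∈ Set.Icc a b}
              ≤ μs n (box u v) + μs n ({x : Fin d → ℝ | x i ∈ Set.Icc a b} \ box u v) := by
                refine le_trans (measure_mono ?_) (measure_union_le _ _)
                intro x hx
                by_cases hxb : x ∈ box u v
                · exact Or.inl hxb
                · exact Or.inr ⟨hx, hxb⟩
            _ = μs n (box u v) := by rw [hnull, add_zero]
      simp only [hval]
      exact tendsto_const_nhds
    have hsub0 : box u v ⊆ {x | x i ∈ Set.Icc a b} := by
      intro x hx
      have := hx i (Set.mem_univ i)
      rw [hu, hv] at this
      simpa only [Set.mem_setOf_eq, Function.update_self] using this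
    have hinter : {x : Fin d → ℝ | x i ∈ Set.Icc a b} ∩ cell 0 = box u v := by
      rw [hcell0]
      ext x
      simp only [Set.mem_inter_iff, Set.mem_setOf_eq, box, Set.mem_pi, Set.mem_univ,
        forall_true_left, Set.mem_Icc]
      constructor
      · rintro ⟨hx, hx01⟩ k
        by_cases hki : k = i
        · subst hki
          rw [hu, hv]
          simp only [Function.update_self]
          exact hx
        · rw [hu, hv]
          simp only [Function.update_of_ne hki]
          exact hx01 k
      · intro hx
        constructor
        · have := hx i
          rw [hu, hv] at this
          simpa only [Function.update_self] using this
        · intro k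
          by_cases hki : k = i
          · subst hki
            have := hx k
            rw [hu, hv] at this
            simp only [Function.update_self] at this
            exact ⟨le_trans h0 this.1, le_trans this.2 h1⟩
          · have := hx k
            rw [hu, hv] at this
            simpa only [Function.update_of_ne hki] using this
    refine le_antisymm ?_ ?_
    · calc μ {x | x i ∈ Set.Icc a b}
          ≤ μ (⋃ z : Fin d → ℤ, {x : Fin d → ℝ | x i ∈ Set.Icc a b} ∩ cell z) := by
            refine measure_mono fun x hx => ?_
            obtain ⟨z, hz⟩ := Set.mem_iUnion.mp (hcover {x} (Set.mem_singleton x))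
            exact Set.mem_iUnion.mpr ⟨z, hx, hz⟩
        _ ≤ ∑' z : Fin d → ℤ, μ ({x : Fin d → ℝ | x i ∈ Set.Icc a b} ∩ cell z) :=
            measure_iUnion_le _
        _ = μ ({x : Fin d → ℝ | x i ∈ Set.Icc a b} ∩ cell 0) := by
            refine tsum_eq_single 0 fun z hz => ?_
            exact measure_mono_null Set.inter_subset_right (hcellzero z hz)
        _ = ENNReal.ofReal (b - a) := by rw [hinter, huvL]
    · rw [← huvL]
      exact measure_mono hsub0
  refine ⟨μ, ⟨hprob, hslab⟩, fun a b => ?_⟩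
  rw [hbox]
  exact hL a b

end Construction

end PermutonAux



/-- Completeness of the space of `d`-dimensional permutons for the box distance: a
sequence of permutons converges to some permuton in box distance if and only if it is
Cauchy with respect to `d_□`. -/
theorem permuton_complete {d : ℕ} (μs : ℕ → Measure (Fin d → ℝ))
    (hμs : ∀ n, IsPermuton (μs n)) :
    (∃ μ : Measure (Fin d → ℝ), IsPermuton μ ∧
        Tendsto (fun n => boxDist (μs n) μ) atTop (𝓝 0)) ↔
      ∀ ε : ℝ, 0 < ε → ∃ N : ℕ, ∀ m ≥ N, ∀ n ≥ N, boxDist (μs m) (μs n) < ε := by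
  constructor
  · rintro ⟨μ, hμ, hconv⟩ ε hε
    obtain ⟨N, hN⟩ := Metric.tendsto_atTop.mp hconv (ε / 2) (by positivity)
    refine ⟨N, fun m hm n hn => ?_⟩
    have hbd : ∀ k, k ≥ N → boxDist (μs k) μ < ε / 2 := by
      intro k hk
      have := hN k hk
      rw [Real.dist_eq, sub_zero] at this
      exact lt_of_le_of_lt (le_abs_self _) this
    have htri := PermutonAux.boxDist_triangle (hμs m).1 (hμs n).1 hμ.1
    have h1 := hbd m hm
    have h2 := hbd n hn
    linarith
  · intro hC
    rcases Nat.eq_zero_or_pos d with hd | hd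
    · subst hd
      refine ⟨μs 0, hμs 0, ?_⟩
      have hall : ∀ n, boxDist (μs n) (μs 0) = 0 := by
        intro n
        haveI := PermutonAux.nonempty_boxIndex (d := 0)
        have hterm : ∀ p : {p : (Fin 0 → ℝ) × (Fin 0 → ℝ) //
            ∀ i, 0 ≤ p.1 i ∧ p.1 i ≤ p.2 i ∧ p.2 i ≤ 1},
            |((μs n) (Set.univ.pi fun i => Set.Icc (p.1.1 i) (p.1.2 i))).toReal -
              ((μs 0) (Set.univ.pi fun i => Set.Icc (p.1.1 i) (p.1.2 i))).toReal| = 0 := by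
          intro p
          have hBuniv : (Set.univ.pi fun i : Fin 0 => Set.Icc (p.1.1 i) (p.1.2 i)) =
              Set.univ := by
            ext x
            simp only [Set.mem_pi, Set.mem_univ, iff_true, forall_true_left]
            exact fun i => i.elim0
          rw [hBuniv, PermutonAux.perm_univ (hμs n), PermutonAux.perm_univ (hμs 0)]
          simp
        unfold boxDist
        rw [funext hterm]
        exact ciSup_const
      have : (fun n => boxDist (μs n) (μs 0)) = fun _ => (0:ℝ) := funext hall
      rw [this]
      exact tendsto_const_nhds
    · obtain ⟨μ, hμ, hboxconv⟩ := PermutonAux.exists_limit_permuton hd hμs hC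
      refine ⟨μ, hμ, ?_⟩
      haveI hμprob := hμ.1
      rw [Metric.tendsto_atTop]
      intro ε hε
      obtain ⟨N, hN⟩ := hC (ε / 2) (by positivity)
      refine ⟨N, fun n hn => ?_⟩
      rw [Real.dist_eq, sub_zero,
        abs_of_nonneg (PermutonAux.boxDist_nonneg (hμs n).1 hμ.1)]
      have hub : boxDist (μs n) μ ≤ ε / 2 := by
        haveI := PermutonAux.nonempty_boxIndex (d := d)
        refine ciSup_le fun p => ?_
        have hne : μ (PermutonAux.box p.1.1 p.1.2) ≠ ⊤ := measure_ne_top μ _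
        have hto : Tendsto (fun m => ((μs m) (PermutonAux.box p.1.1 p.1.2)).toReal) atTop
            (𝓝 ((μ (PermutonAux.box p.1.1 p.1.2)).toReal)) :=
          (ENNReal.tendsto_toReal hne).comp (hboxconv p.1.1 p.1.2)
        have habs : Tendsto (fun m =>
            |((μs n) (PermutonAux.box p.1.1 p.1.2)).toReal -
              ((μs m) (PermutonAux.box p.1.1 p.1.2)).toReal|) atTop
            (𝓝 |((μs n) (PermutonAux.box p.1.1 p.1.2)).toReal -
              (μ (PermutonAux.box p.1.1 p.1.2)).toReal|) :=
          (tendsto_const_nhds.sub hto).abs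
        refine le_of_tendsto habs ?_
        filter_upwards [eventually_ge_atTop N] with m hm
        exact (PermutonAux.abs_le_boxDist (hμs n).1 (hμs m).1 p.2).trans (hN n hn m hm).le
      linarith
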